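/- Let K be a field, σ an automorphism of K of order 2, F a subfield of K contained in Fix(σ), V a vector space over K, β : V×V → K a nonzero hermitian form with respect to σ, and L : K → F a nonzero F-linear map, so that Lβ = L∘β is an F-bilinear form on V regarded as an F-vector space. Then: (1) Lβ is symmetric if and only if L∘σ = L; (2) if char K ≠ 2, then Lβ is alternating if and only if L∘σ = −L; (3) if char K ≠ 2, then Lβ is neither symmetric nor alternating if and only if L∘σ ≠ L and L∘σ ≠ −L. -/
import Mathlib


/-- Let `K` be a field, `σ` an automorphism of `K` of order `2`, `F` a
subfield of `K` contained in `Fix(σ)`, `V` a vector space over `K`, `β : V × V → K` a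
nonzero hermitian form with respect to `σ`, and `L : K → F` a nonzero `F`-linear map, so
that `Lβ = L ∘ β` is an `F`-bilinear form on `V` regarded as an `F`-vector space.  Then:
(1) `Lβ` is symmetric if and only if `L ∘ σ = L`;
(2) if `char K ≠ 2`, then `Lβ` is alternating if and only if `L ∘ σ = −L`;
(3) if `char K ≠ 2`, then `Lβ` is neither symmetric nor alternating if and only if
`L ∘ σ ≠ L` and `L ∘ σ ≠ −L`. -/
theorem stmt_7 {K : Type*} [Field K]
    (σ : K ≃+* K) (hσ2 : ∀ x : K, σ (σ x) = x) (hσne : σ ≠ RingEquiv.refl K)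
    (F : Subfield K) (hFfix : ∀ x : K, x ∈ F → σ x = x)
    {V : Type*} [AddCommGroup V] [Module K V]
    (β : V → V → K)
    (hβadd₁ : ∀ u v w : V, β (u + v) w = β u w + β v w)
    (hβadd₂ : ∀ u v w : V, β u (v + w) = β u v + β u w)
    (hβsmul₁ : ∀ (a : K) (v w : V), β (a • v) w = a * β v w)
    (hβsmul₂ : ∀ (a : K) (v w : V), β v (a • w) = σ a * β v w)
    (hβherm : ∀ v w : V, β w v = σ (β v w))
    (hβne : ∃ v w : V, β v w ≠ 0)
    (L : K → F)
    (hLadd : ∀ x y : K, L (x + y) = L x + L y)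
    (hLsmul : ∀ (c : F) (x : K), L ((c : K) * x) = c * L x)
    (hL0 : ∃ x : K, L x ≠ 0) :
    ((∀ v w : V, L (β v w) = L (β w v)) ↔ (∀ x : K, L (σ x) = L x)) ∧
    (ringChar K ≠ 2 →
      ((∀ v : V, L (β v v) = 0) ↔ (∀ x : K, L (σ x) = - L x))) ∧
    (ringChar K ≠ 2 →
      ((¬ (∀ v w : V, L (β v w) = L (β w v)) ∧ ¬ (∀ v : V, L (β v v) = 0)) ↔
        (¬ (∀ x : K, L (σ x) = L x) ∧ ¬ (∀ x : K, L (σ x) = - L x)))) := by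

  obtain ⟨v₀, w₀, hc⟩ := hβne
  have key : ∀ x : K, β (((β v₀ w₀)⁻¹ * x) • v₀) w₀ = x := by
    intro x
    rw [hβsmul₁]
    field_simp
  have h1 : (∀ v w : V, L (β v w) = L (β w v)) ↔ (∀ x : K, L (σ x) = L x) := by
    constructor
    · intro h x
      have h' := h ((((β v₀ w₀)⁻¹ * x)) • v₀) w₀
      rw [key, hβherm, key] at h'
      exact h'.symm
    · intro h v w
      rw [hβherm v w, h]
  have h2 : ringChar K ≠ 2 → ((∀ v : V, L (β v v) = 0) ↔ (∀ x : K, L (σ x) = - L x)) := by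
    intro hchar
    have h2K : (2 : K) ≠ 0 := Ring.two_ne_zero hchar
    constructor
    · intro h x
      set u := (((β v₀ w₀)⁻¹ * x)) • v₀ with hu
      have hexp := h (u + w₀)
      rw [hβadd₁, hβadd₂, hβadd₂, hLadd, hLadd, hLadd, h u, h w₀] at hexp
      have huw : β u w₀ = x := key x
      have hwu : β w₀ u = σ x := by rw [hβherm, huw]
      rw [huw, hwu] at hexp
      linear_combination hexp
    · intro h v
      have hsym : β v v = σ (β v v) := hβherm v v
      have : L (β v v) = - L (β v v) := by
        conv_lhs => rw [hsym]
        exact h _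
      have h2 : (2 : F) * L (β v v) = 0 := by linear_combination this
      have h2F : (2 : F) ≠ 0 := by
        intro hF
        apply h2K
        have : ((2 : F) : K) = (2 : K) := by norm_cast
        rw [← this, hF]; simp
      exact (mul_eq_zero.mp h2).resolve_left h2F
  refine ⟨h1, h2, fun hchar => ?_⟩
  rw [not_iff_not.mpr h1, not_iff_not.mpr (h2 hchar)]
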